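/- For every (μ)(ν) ∈ X_C^{*2} one has (μ)(ν) ≤ Φ_C((μ)(ν)) in the dominance-type order on pairs of partitions; similarly for every (μ)(ν) ∈ X_B^{*2}, (μ)(ν) ≤ Φ_B((μ)(ν)). -/

import Mathlib

open Finset

/-- A partition: weakly decreasing, finitely supported sequence of naturals (0-indexed). -/
def IsPartition (μ : ℕ → ℕ) : Prop :=
  Antitone μ ∧ ∃ N, ∀ i, N ≤ i → μ i = 0

/-- Membership in `P_2(n)`: a pair of partitions of total size `n`. -/
def PairP2 (n : ℕ) (p : (ℕ → ℕ) × (ℕ → ℕ)) : Prop :=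
  IsPartition p.1 ∧ IsPartition p.2 ∧
    ∃ N, (∀ i, N ≤ i → p.1 i = 0 ∧ p.2 i = 0) ∧
      (∑ i ∈ range N, (p.1 i + p.2 i)) = n

/-- The dominance-type order on pairs of partitions (0-indexed: `p.1 0` is `μ_1`). -/
def PairLE (p q : (ℕ → ℕ) × (ℕ → ℕ)) : Prop :=
  (∀ j, ∑ i ∈ range j, (p.1 i + p.2 i) ≤ ∑ i ∈ range j, (q.1 i + q.2 i)) ∧
  (∀ j, (∑ i ∈ range j, (p.1 i + p.2 i)) + p.1 j ≤
        (∑ i ∈ range j, (q.1 i + q.2 i)) + q.1 j)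

/-- The map `Φ_C` on pairs of partitions (0-indexed). -/
def PhiC (p : (ℕ → ℕ) × (ℕ → ℕ)) : (ℕ → ℕ) × (ℕ → ℕ) :=
  (fun i => match i with
    | 0 => p.1 0
    | j + 1 =>
        if p.2 j + 1 < p.1 (j + 1) then (p.1 (j + 1) + p.2 j + 1) / 2
        else p.1 (j + 1),
   fun i =>
    if p.2 i + 1 < p.1 (i + 1) then (p.1 (i + 1) + p.2 i) / 2 else p.2 i)

/-- The map `Φ_B` on pairs of partitions (0-indexed). -/
def PhiB (p : (ℕ → ℕ) × (ℕ → ℕ)) : (ℕ → ℕ) × (ℕ → ℕ) :=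
  (fun i => if p.1 i + 2 < p.2 i then (p.1 i + p.2 i - 1) / 2 else p.1 i,
   fun i => if p.1 i + 2 < p.2 i then (p.1 i + p.2 i + 2) / 2 else p.2 i)

/-- `τ ≤ Φ_C(τ)` on `X_C^{*2}` and `τ ≤ Φ_B(τ)` on `X_B^{*2}`. -/
theorem le_phi :
    (∀ p : (ℕ → ℕ) × (ℕ → ℕ), IsPartition p.1 → IsPartition p.2 →
      (∀ i, p.2 i ≤ p.1 i + 1) → PairLE p (PhiC p)) ∧
    (∀ p : (ℕ → ℕ) × (ℕ → ℕ), IsPartition p.1 → IsPartition p.2 →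
      (∀ i, p.1 (i + 1) ≤ p.2 i) → PairLE p (PhiB p)) := by
  constructor
  · intro p _ _ _
    have hB : ∀ i, (PhiC p).1 (i+1) + (PhiC p).2 i = p.1 (i+1) + p.2 i := by
      intro i
      simp only [PhiC]
      by_cases h : p.2 i + 1 < p.1 (i+1)
      · simp only [if_pos h]; omega
      · simp only [if_neg h]
    have hA : ∀ i, p.2 i ≤ (PhiC p).2 i := by
      intro i
      simp only [PhiC]
      by_cases h : p.2 i + 1 < p.1 (i+1)
      · simp only [if_pos h]; omega
      · simp only [if_neg h]; exact le_rfl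
    have hC : (PhiC p).1 0 = p.1 0 := rfl
    have key : ∀ j, (∑ i ∈ range j, (p.1 i + p.2 i)) + p.1 j =
        (∑ i ∈ range j, ((PhiC p).1 i + (PhiC p).2 i)) + (PhiC p).1 j := by
      intro j
      induction j with
      | zero => simp [hC]
      | succ j ih =>
        rw [sum_range_succ, sum_range_succ]
        have := hB j
        omega
    refine ⟨?_, fun j => (key j).le⟩
    intro j
    cases j with
    | zero => simp
    | succ j =>
      rw [sum_range_succ, sum_range_succ]
      have h1 := key j
      have h2 := hA j
      omega
  · intro p _ _ _
    have hB : ∀ i, (PhiB p).1 i + (PhiB p).2 i = p.1 i + p.2 i := by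
      intro i
      simp only [PhiB]
      by_cases h : p.1 i + 2 < p.2 i
      · simp only [if_pos h]; omega
      · simp only [if_neg h]
    have hA : ∀ i, p.1 i ≤ (PhiB p).1 i := by
      intro i
      simp only [PhiB]
      by_cases h : p.1 i + 2 < p.2 i
      · simp only [if_pos h]; omega
      · simp only [if_neg h]; exact le_rfl
    have hsum : ∀ j, ∑ i ∈ range j, (p.1 i + p.2 i)
        = ∑ i ∈ range j, ((PhiB p).1 i + (PhiB p).2 i) :=
      fun j => Finset.sum_congr rfl (fun i _ => (hB i).symm)
    exact ⟨fun j => (hsum j).le,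
      fun j => by rw [hsum j]; exact Nat.add_le_add_left (hA j) _⟩
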